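/- arXiv:2004.00604 — 2 statements merged into one kernel-verified Lean document; each statement's English description precedes it below -/
import Mathlib

section
/- Let S be an ∞-orthogonal collection of D^b(kQ) contained in the fundamental domain F_{−w}. Then: (1) the set {F^n s : n ∈ ℤ, s ∈ S} is an orthogonal collection in D^b(kQ), i.e. Hom(F^m s₁, F^n s₂) = 0 whenever (m,s₁) ≠ (n,s₂) and End(F^n s) ≅ k for all n ∈ ℤ and s ∈ S; (2) for all k ≥ 1 one has Ext¹_{D^b(kQ)}(S, F^k S) = Hom_{D^b(kQ)}(S, Σ F^k S) = 0. -/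
namespace Paper

open CategoryTheory Limits Pretriangulated Opposite

universe w v u v' u'

variable (k : Type w) [Field k]
variable (D : Type u) [Category.{v} D] [Preadditive D] [HasZeroObject D]
  [HasShift D ℤ] [∀ n : ℤ, (CategoryTheory.shiftFunctor D n).Additive] [Pretriangulated D]
  [CategoryTheory.Linear k D]

/-- `D` is Hom-finite over `k`. -/
def HomFinite : Prop := ∀ x y : D, FiniteDimensional k (x ⟶ y)

/-- `D` is Krull-Schmidt: every object is a finite biproduct of objects with
local endomorphism rings. -/
def KrullSchmidt [HasFiniteBiproducts D] : Prop :=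
  ∀ x : D, ∃ (n : ℕ) (f : Fin n → D),
    (∀ i, IsLocalRing (End (f i))) ∧ Nonempty (x ≅ ⨁ f)

variable {k D}

/-- `A * B`: objects `d` admitting a distinguished triangle `a → d → b → Σ a`
with `a ∈ A`, `b ∈ B`. -/
def star (A B : Set D) : Set D :=
  {d | ∃ (a b : D) (f : a ⟶ d) (g : d ⟶ b) (h : b ⟶ a⟦(1 : ℤ)⟧),
    a ∈ A ∧ b ∈ B ∧ Triangle.mk f g h ∈ distTriang D}

/-- closure under retracts (in particular under isomorphisms and direct summands) -/
def IsClosedUnderRetracts (A : Set D) : Prop :=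
  ∀ ⦃x y : D⦄ (i : x ⟶ y) (r : y ⟶ x), i ≫ r = 𝟙 x → y ∈ A → x ∈ A

/-- `A⊥`: objects receiving no nonzero morphism from `A`. -/
def rightPerp (A : Set D) : Set D := {d | ∀ x ∈ A, ∀ f : x ⟶ d, f = 0}

/-- `⊥A`: objects admitting no nonzero morphism to `A`. -/
def leftPerp (A : Set D) : Set D := {d | ∀ x ∈ A, ∀ f : d ⟶ x, f = 0}

/-- `Σⁿ A` (for `A` closed under isomorphisms). -/
def shiftSet (n : ℤ) (A : Set D) : Set D := {d | d⟦(-n)⟧ ∈ A}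

/-- A t-structure on `D`: a pair of full subcategories closed under direct summands
with `Hom(X,Y) = 0`, `D = X * Y` and `Σ X ⊆ X`. -/
structure IsTStructure (X Y : Set D) : Prop where
  retractX : IsClosedUnderRetracts X
  retractY : IsClosedUnderRetracts Y
  homZero : ∀ x ∈ X, ∀ y ∈ Y, ∀ f : x ⟶ y, f = 0
  decomp : ∀ d : D, d ∈ star X Y
  shiftX : ∀ x ∈ X, x⟦(1 : ℤ)⟧ ∈ X

/-- A co-t-structure on `D`: as above but with `Σ⁻¹ X ⊆ X`. -/
structure IsCoTStructure (X Y : Set D) : Prop where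
  retractX : IsClosedUnderRetracts X
  retractY : IsClosedUnderRetracts Y
  homZero : ∀ x ∈ X, ∀ y ∈ Y, ∀ f : x ⟶ y, f = 0
  decomp : ∀ d : D, d ∈ star X Y
  shiftX : ∀ x ∈ X, x⟦(-1 : ℤ)⟧ ∈ X

/-- boundedness of a (co-)t-structure -/
def IsBounded (X Y : Set D) : Prop :=
  ∀ d : D, (∃ n : ℤ, d⟦n⟧ ∈ X) ∧ (∃ n : ℤ, d⟦n⟧ ∈ Y)

/-- the heart `H = X ∩ Σ Y` of a t-structure `(X,Y)` -/
def heart (X Y : Set D) : Set D := {d | d ∈ X ∧ d⟦(-1 : ℤ)⟧ ∈ Y}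

/-- `f : a ⟶ d` is a right `A`-approximation of `d`. -/
def IsRightApprox (A : Set D) {a d : D} (f : a ⟶ d) : Prop :=
  a ∈ A ∧ ∀ a' ∈ A, ∀ g : a' ⟶ d, ∃ h : a' ⟶ a, h ≫ f = g

/-- `f : d ⟶ a` is a left `A`-approximation of `d`. -/
def IsLeftApprox (A : Set D) {d a : D} (f : d ⟶ a) : Prop :=
  a ∈ A ∧ ∀ a' ∈ A, ∀ g : d ⟶ a', ∃ h : a ⟶ a', f ≫ h = g

/-- `A` is contravariantly finite in (the full subcategory) `B`. -/
def ContravariantlyFiniteIn (A B : Set D) : Prop :=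
  ∀ d ∈ B, ∃ (a : D) (f : a ⟶ d), IsRightApprox A f

/-- `A` is covariantly finite in `B`. -/
def CovariantlyFiniteIn (A B : Set D) : Prop :=
  ∀ d ∈ B, ∃ (a : D) (f : d ⟶ a), IsLeftApprox A f

def ContravariantlyFinite (A : Set D) : Prop := ContravariantlyFiniteIn A Set.univ
def CovariantlyFinite (A : Set D) : Prop := CovariantlyFiniteIn A Set.univ
def FunctoriallyFinite (A : Set D) : Prop :=
  ContravariantlyFinite A ∧ CovariantlyFinite A

/-- the projective coheart `S = ⊥(ΣX) ∩ X` of a t-structure -/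
def projCoheart (X : Set D) : Set D :=
  {d | d ∈ X ∧ ∀ x ∈ X, ∀ f : d ⟶ x⟦(1 : ℤ)⟧, f = 0}

/-- the injective coheart `C = Y⊥ ∩ ΣY` of a t-structure -/
def injCoheart (Y : Set D) : Set D :=
  {d | d⟦(-1 : ℤ)⟧ ∈ Y ∧ ∀ y ∈ Y, ∀ f : y ⟶ d, f = 0}

/-- `(X,Y)` has enough Ext-injectives: the injective coheart is covariantly finite in
`ΣY` and `⊥C ∩ H = 0`. -/
def HasEnoughExtInjectives (X Y : Set D) : Prop :=
  CovariantlyFiniteIn (injCoheart Y) (shiftSet 1 Y) ∧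
  ∀ d ∈ leftPerp (injCoheart Y), d ∈ heart X Y → IsZero d

/-- `(X,Y)` has enough Ext-projectives: the projective coheart is contravariantly finite
in `X` and `S⊥ ∩ H = 0`. -/
def HasEnoughExtProjectives (X Y : Set D) : Prop :=
  ContravariantlyFiniteIn (projCoheart X) X ∧
  ∀ d ∈ rightPerp (projCoheart X), d ∈ heart X Y → IsZero d

/-- `e` is an injective object of the heart: `e ∈ H` and `Ext¹_H(-,e) = Hom_D(-, Σe)|_H = 0`. -/
def heartInjective (X Y : Set D) (e : D) : Prop :=
  e ∈ heart X Y ∧ ∀ h ∈ heart X Y, ∀ f : h ⟶ e⟦(1 : ℤ)⟧, f = 0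

/-- `p` is a projective object of the heart: `p ∈ H` and `Ext¹_H(p,-) = Hom_D(p, Σ(-))|_H = 0`. -/
def heartProjective (X Y : Set D) (p : D) : Prop :=
  p ∈ heart X Y ∧ ∀ h ∈ heart X Y, ∀ f : p ⟶ h⟦(1 : ℤ)⟧, f = 0

/-- `f : a ⟶ b` (with `a, b ∈ H`) is a monomorphism in `H`: its cone lies in `H`,
i.e. `f` fits in a short exact sequence `0 → a → b → c → 0` of `H`. -/
def heartMono (X Y : Set D) {a b : D} (f : a ⟶ b) : Prop :=
  ∃ (c : D) (g : b ⟶ c) (h : c ⟶ a⟦(1 : ℤ)⟧),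
    c ∈ heart X Y ∧ Triangle.mk f g h ∈ distTriang D

/-- `f : a ⟶ b` (with `a, b ∈ H`) is an epimorphism in `H`: its cocone lies in `H`. -/
def heartEpi (X Y : Set D) {a b : D} (f : a ⟶ b) : Prop :=
  ∃ (c : D) (g : c ⟶ a) (h : b ⟶ c⟦(1 : ℤ)⟧),
    c ∈ heart X Y ∧ Triangle.mk g f h ∈ distTriang D

/-- the heart has enough injectives -/
def HeartHasEnoughInjectives (X Y : Set D) : Prop :=
  ∀ h ∈ heart X Y, ∃ (e : D) (f : h ⟶ e), heartInjective X Y e ∧ heartMono X Y f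

/-- the heart has enough projectives -/
def HeartHasEnoughProjectives (X Y : Set D) : Prop :=
  ∀ h ∈ heart X Y, ∃ (p : D) (f : p ⟶ h), heartProjective X Y p ∧ heartEpi X Y f

/-- `h₀ = H⁰(c)` for `c ∈ ΣY`: there is a truncation triangle `h₀ → c → y → Σh₀`
with `h₀ ∈ H` and `y ∈ Y`. -/
def IsH0ofCoaisle (X Y : Set D) (c h₀ : D) : Prop :=
  h₀ ∈ heart X Y ∧ ∃ (g : h₀ ⟶ c) (y : D) (u : c ⟶ y) (e : y ⟶ h₀⟦(1 : ℤ)⟧),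
    y ∈ Y ∧ Triangle.mk g u e ∈ distTriang D

/-- `h₀ = H⁰(s)` for `s ∈ X`: there is a truncation triangle `x → s → h₀ → Σx`
with `x ∈ ΣX` and `h₀ ∈ H`. -/
def IsH0ofAisle (X Y : Set D) (s h₀ : D) : Prop :=
  h₀ ∈ heart X Y ∧ ∃ (x : D) (f : x ⟶ s) (g : s ⟶ h₀) (e : h₀ ⟶ x⟦(1 : ℤ)⟧),
    x⟦(-1 : ℤ)⟧ ∈ X ∧ Triangle.mk f g e ∈ distTriang D

/-- indecomposable object -/
def Indec (x : D) : Prop :=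
  ¬ IsZero x ∧ ∀ f : x ⟶ x, f ≫ f = f → f = 0 ∨ f = 𝟙 x

/-- extension-closed subcategory (containing the zero objects) -/
def IsExtClosed (A : Set D) : Prop :=
  (∀ x : D, IsZero x → x ∈ A) ∧ star A A ⊆ A

/-- the extension closure `⟨S⟩` of a collection `S` -/
def extClosure (S : Set D) : Set D := ⋂₀ {A : Set D | S ⊆ A ∧ IsExtClosed A}

/-- thick subcategory -/
def IsThick (A : Set D) : Prop :=
  (∀ x : D, IsZero x → x ∈ A) ∧ star A A ⊆ A ∧ IsClosedUnderRetracts A ∧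
  (∀ x ∈ A, ∀ m : ℤ, x⟦m⟧ ∈ A)

/-- the thick subcategory generated by `S` -/
def thickClosure (S : Set D) : Set D := ⋂₀ {A : Set D | S ⊆ A ∧ IsThick A}

/-- the suspended closure `susp S`: smallest extension-closed subcategory containing `S`
closed under `Σ` -/
def suspClosure (S : Set D) : Set D :=
  ⋂₀ {A : Set D | S ⊆ A ∧ IsExtClosed A ∧ ∀ x ∈ A, x⟦(1 : ℤ)⟧ ∈ A}

/-- the cosuspended closure `cosusp S` -/
def cosuspClosure (S : Set D) : Set D :=
  ⋂₀ {A : Set D | S ⊆ A ∧ IsExtClosed A ∧ ∀ x ∈ A, x⟦(-1 : ℤ)⟧ ∈ A}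

variable (k) in
/-- orthogonal collection: `dim_k Hom(x,y) = δ_{x,y}` for `x, y ∈ S` -/
def IsOrthogonal (S : Set D) : Prop :=
  (∀ x ∈ S, ∀ y ∈ S, x ≠ y → ∀ f : x ⟶ y, f = 0) ∧
  (∀ x ∈ S, ∀ f : x ⟶ x, ∃ c : k, f = c • 𝟙 x) ∧
  (∀ x ∈ S, 𝟙 x ≠ 0)

variable (k) in
/-- `∞`-orthogonal collection: orthogonal and `Hom(Σᵐ x, y) = 0` for all `m ≥ 1` -/
def IsInfOrthogonal (S : Set D) : Prop :=
  IsOrthogonal k S ∧ ∀ x ∈ S, ∀ y ∈ S, ∀ m : ℤ, 1 ≤ m → ∀ f : x⟦m⟧ ⟶ y, f = 0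

variable (k) in
/-- `w`-orthogonal collection: orthogonal and `Hom(Σᵐ x, y) = 0` for `1 ≤ m ≤ w - 1` -/
def IsWOrthogonal (w : ℕ) (S : Set D) : Prop :=
  IsOrthogonal k S ∧
  ∀ x ∈ S, ∀ y ∈ S, ∀ m : ℤ, 1 ≤ m → m ≤ (w : ℤ) - 1 → ∀ f : x⟦m⟧ ⟶ y, f = 0

variable (k) in
/-- simple-minded collection -/
def IsSMC (S : Set D) : Prop :=
  IsInfOrthogonal k S ∧ ∀ d : D, d ∈ thickClosure S

/-- `Σ⁻¹ A` as an image -/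
def shiftNegOne (A : Set D) : Set D := (fun a : D => a⟦(-1 : ℤ)⟧) '' A

/-- `⟨A⟩ * Σ⁻¹⟨A⟩ * ⋯ * Σ^{1-w}⟨A⟩` (with `w` factors) -/
def smsFilt (A : Set D) : ℕ → Set D
  | 0 => {d | IsZero d}
  | (l + 1) => star (extClosure A) (shiftNegOne (smsFilt A l))

variable (k) in
/-- `w`-simple-minded system -/
def IsWSMS (w : ℕ) (A : Set D) : Prop :=
  IsWOrthogonal k w A ∧ ∀ d : D, d ∈ smsFilt A w

variable (k) in
/-- `∞`-Riedtmann configuration: `∞`-orthogonal and `⊥(Σ^{<0} S) ∩ (Σ^{≥0} S)⊥ = 0` -/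
def IsInfRiedtmann (S : Set D) : Prop :=
  IsInfOrthogonal k S ∧
  ∀ d : D, (∀ s ∈ S, ∀ m : ℤ, m < 0 → ∀ f : d ⟶ s⟦m⟧, f = 0) →
    (∀ s ∈ S, ∀ m : ℤ, 0 ≤ m → ∀ f : s⟦m⟧ ⟶ d, f = 0) → IsZero d

variable (k) in
/-- `w`-Riedtmann configuration: `w`-orthogonal, `⋂_{0 ≤ m ≤ w-1} (Σᵐ S)⊥ = 0` and
`⋂_{0 ≤ m ≤ w-1} ⊥(Σ⁻ᵐ S) = 0` -/
def IsWRiedtmann (w : ℕ) (S : Set D) : Prop :=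
  IsWOrthogonal k w S ∧
  (∀ d : D, (∀ m : ℕ, m ≤ w - 1 → ∀ s ∈ S, ∀ f : s⟦(m : ℤ)⟧ ⟶ d, f = 0) → IsZero d) ∧
  (∀ d : D, (∀ m : ℕ, m ≤ w - 1 → ∀ s ∈ S, ∀ f : d ⟶ s⟦-(m : ℤ)⟧, f = 0) → IsZero d)

end Paper

namespace Paper

open CategoryTheory Limits Pretriangulated Opposite

universe w v u

variable {k : Type w} [Field k] [IsAlgClosed k]
variable {D : Type u} [Category.{v} D] [Preadditive D] [HasZeroObject D]
  [HasShift D ℤ] [∀ n : ℤ, (CategoryTheory.shiftFunctor D n).Additive] [Pretriangulated D]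
  [CategoryTheory.Linear k D] [HasFiniteBiproducts D]

/-- a simple object of the heart: nonzero, and with no proper nontrivial subobject
(every short exact sequence `0 → a → s → b → 0` in `H` has `a = 0` or `b = 0`) -/
def heartSimple (X Y : Set D) (s : D) : Prop :=
  s ∈ heart X Y ∧ ¬ IsZero s ∧
  ∀ (a b : D) (f : a ⟶ s) (g : s ⟶ b) (h : b ⟶ a⟦(1 : ℤ)⟧),
    a ∈ heart X Y → b ∈ heart X Y → (Triangle.mk f g h ∈ distTriang D) →
    IsZero a ∨ IsZero b

/-- iterated star product: `A * A * ⋯ * A` (`n` factors, starting from zero objects) -/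
def iterStar (A : Set D) : ℕ → Set D
  | 0 => {d | IsZero d}
  | (n + 1) => star A (iterStar A n)

/-- an algebraic t-structure: a bounded t-structure whose heart is a length category
(every object has a finite composition series) with finitely many simple objects
up to isomorphism -/
def IsAlgebraicTStructure (X Y : Set D) : Prop :=
  IsTStructure X Y ∧ IsBounded X Y ∧
  (∀ h ∈ heart X Y, ∃ n : ℕ, h ∈ iterStar {s : D | heartSimple X Y s} n) ∧
  (∃ (m : ℕ) (f : Fin m → D), ∀ s : D, heartSimple X Y s → ∃ i, Nonempty (s ≅ f i))

variable (k D) in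
/-- Axiomatization of `D^b(kQ)` for a finite acyclic quiver `Q` with `n` vertices:
a Hom-finite, Krull-Schmidt, `k`-linear triangulated category with a Serre functor
(exhibited by trace maps and perfect composition pairings), a standard bounded
t-structure `(X, Y)` with hereditary heart (`mod kQ`), in which every object splits as a
direct sum of shifts of heart objects, together with the `n` simple modules, which can be
ordered into an exceptional sequence (acyclicity of `Q`) and filter every heart object. -/
structure HereditarySetup (n : ℕ) where
  homFinite : HomFinite k D
  krullSchmidt : KrullSchmidt D
  /-- the Serre functor `𝕊` -/
  serreF : D ⥤ D
  serre_additive : serreF.Additive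
  serre_equivalence : serreF.IsEquivalence
  /-- the trace maps of Serre duality -/
  tr : ∀ x : D, (x ⟶ serreF.obj x) →ₗ[k] k
  /-- Serre duality: the pairing `Hom(x,y) × Hom(y,𝕊x) → k` is perfect -/
  serre_duality : ∀ (x y : D) (φ : (y ⟶ serreF.obj x) →ₗ[k] k),
    ∃! f : x ⟶ y, ∀ g : y ⟶ serreF.obj x, tr x (f ≫ g) = φ g
  /-- the aisle of the standard t-structure -/
  X : Set D
  /-- the coaisle of the standard t-structure -/
  Y : Set D
  tstr : IsTStructure X Y
  bounded : IsBounded X Y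
  /-- the heart is hereditary -/
  hereditary : ∀ a ∈ heart X Y, ∀ b ∈ heart X Y, ∀ m : ℤ, m ≠ 0 → m ≠ 1 →
    ∀ f : a ⟶ b⟦m⟧, f = 0
  /-- every object is a finite direct sum of shifts of heart objects -/
  splitting : ∀ d : D, ∃ (m : ℕ) (h : Fin m → D),
    (∀ i, ∃ s : ℤ, (h i)⟦s⟧ ∈ heart X Y) ∧ Nonempty (d ≅ ⨁ h)
  /-- the simple modules -/
  simples : Fin n → D
  simples_simple : ∀ i, heartSimple X Y (simples i)
  simples_nonIso : ∀ i j, i ≠ j → IsEmpty (simples i ≅ simples j)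
  simples_complete : ∀ s : D, heartSimple X Y s → ∃ i, Nonempty (s ≅ simples i)
  /-- `(simples 0, …, simples (n-1))` is an exceptional sequence -/
  simples_exceptional : ∀ i j : Fin n, j < i → ∀ m : ℤ,
    ∀ f : simples i ⟶ (simples j)⟦m⟧, f = 0
  finiteLength : ∀ h ∈ heart X Y, ∃ m : ℕ, h ∈ iterStar {s : D | heartSimple X Y s} m

namespace HereditarySetup

variable {n : ℕ} (HS : HereditarySetup k D n)

/-- the autoequivalence `F = Σ^w ∘ 𝕊` -/
def F (w : ℕ) : D ⥤ D := HS.serreF ⋙ CategoryTheory.shiftFunctor D (w : ℤ)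

/-- the fundamental domain `F_{-w} = X ∩ Σ^w 𝕊 Y` -/
def fd (w : ℕ) : Set D :=
  {d | d ∈ HS.X ∧ ∃ y ∈ HS.Y,
    Nonempty (d ≅ (CategoryTheory.shiftFunctor D (w : ℤ)).obj (HS.serreF.obj y))}

end HereditarySetup

/-- the family of powers `Fᵐ`, `m ∈ ℤ`, of the autoequivalence `F = Σ^w ∘ 𝕊` -/
structure FPowData {n : ℕ} (HS : HereditarySetup k D n) (w : ℕ) where
  pow : ℤ → D ⥤ D
  pow_zero : pow 0 ≅ 𝟭 D
  pow_succ : ∀ m : ℤ, pow (m + 1) ≅ pow m ⋙ HS.F w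

/-- the image `Fᵐ S` of a collection `S` -/
def powImage (pw : ℤ → D ⥤ D) (S : Set D) (m : ℤ) : Set D :=
  (fun d => (pw m).obj d) '' S

/-- `⟨Fᵐ S⟩ * ⟨F^{m+1} S⟩ * ⋯ * ⟨F^{m+l} S⟩` -/
def chainStar (pw : ℤ → D ⥤ D) (S : Set D) : ℕ → ℤ → Set D
  | 0, m => extClosure (powImage pw S m)
  | (l + 1), m => star (extClosure (powImage pw S m)) (chainStar pw S l (m + 1))

/-- `E_S = ⟨Fᵐ S ∣ m ∈ ℤ⟩`, the extension closure of all `F`-powers of `S` -/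
def bigES (pw : ℤ → D ⥤ D) (S : Set D) : Set D :=
  extClosure {d | ∃ (m : ℤ) (s : D), s ∈ S ∧ d = (pw m).obj s}

/-! ### Auxiliary machinery for statement 7 -/

/-- All morphisms from `A` to `B` vanish. -/
def ZH (A B : D) : Prop := ∀ f : A ⟶ B, f = 0

lemma ZH_of_iso {A A' B B' : D} (eA : A ≅ A') (eB : B ≅ B') (h : ZH A' B') : ZH A B := by
  intro f
  have h0 : eA.inv ≫ f ≫ eB.hom = 0 := h _
  calc f = eA.hom ≫ (eA.inv ≫ f ≫ eB.hom) ≫ eB.inv := by simp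
  _ = 0 := by rw [h0]; simp

lemma ZH_of_map (T : D ⥤ D) [T.Faithful] [T.Additive] {A B : D}
    (h : ZH (T.obj A) (T.obj B)) : ZH A B := by
  intro f
  apply T.map_injective
  rw [h (T.map f), T.map_zero]

lemma ZH_map (T : D ⥤ D) [T.Full] [T.Additive] {A B : D} (h : ZH A B) :
    ZH (T.obj A) (T.obj B) := by
  intro f
  obtain ⟨g, rfl⟩ := T.map_surjective f
  rw [h g, T.map_zero]

lemma mem_of_iso {A : Set D} (hA : IsClosedUnderRetracts A) {a b : D} (e : a ≅ b)
    (hb : b ∈ A) : a ∈ A :=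
  hA e.hom e.inv e.hom_inv_id hb

/-- iterate an endofunctor -/
def iterFun (T : D ⥤ D) : ℕ → D ⥤ D
  | 0 => 𝟭 D
  | m + 1 => iterFun T m ⋙ T

lemma iterFun_additive (T : D ⥤ D) [T.Additive] : ∀ m, (iterFun T m).Additive
  | 0 => inferInstanceAs (𝟭 D).Additive
  | m + 1 => by
      haveI := iterFun_additive T m
      exact inferInstanceAs ((iterFun T m ⋙ T).Additive)

lemma iterFun_full (T : D ⥤ D) [T.Full] : ∀ m, (iterFun T m).Full
  | 0 => inferInstanceAs (𝟭 D).Full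
  | m + 1 => by
      haveI := iterFun_full T m
      exact inferInstanceAs ((iterFun T m ⋙ T).Full)

lemma iterFun_faithful (T : D ⥤ D) [T.Faithful] : ∀ m, (iterFun T m).Faithful
  | 0 => inferInstanceAs (𝟭 D).Faithful
  | m + 1 => by
      haveI := iterFun_faithful T m
      exact inferInstanceAs ((iterFun T m ⋙ T).Faithful)

/-- `ℤ`-indexed powers of an autoequivalence -/
def myPow (e : D ≌ D) (m : ℤ) : D ⥤ D :=
  iterFun e.functor m.toNat ⋙ iterFun e.inverse (-m).toNat

lemma myPow_additive (e : D ≌ D) [e.functor.Additive] (m : ℤ) : (myPow e m).Additive := by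
  haveI := iterFun_additive e.functor m.toNat
  haveI := iterFun_additive e.inverse (-m).toNat
  exact inferInstanceAs ((iterFun e.functor m.toNat ⋙ iterFun e.inverse (-m).toNat).Additive)

lemma myPow_full (e : D ≌ D) (m : ℤ) : (myPow e m).Full := by
  haveI := iterFun_full e.functor m.toNat
  haveI := iterFun_full e.inverse (-m).toNat
  exact inferInstanceAs ((iterFun e.functor m.toNat ⋙ iterFun e.inverse (-m).toNat).Full)

lemma myPow_faithful (e : D ≌ D) (m : ℤ) : (myPow e m).Faithful := by
  haveI := iterFun_faithful e.functor m.toNat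
  haveI := iterFun_faithful e.inverse (-m).toNat
  exact inferInstanceAs ((iterFun e.functor m.toNat ⋙ iterFun e.inverse (-m).toNat).Faithful)

lemma myPow_obj_nonneg (e : D ≌ D) {m : ℤ} (hm : 0 ≤ m) (x : D) :
    (myPow e m).obj x = (iterFun e.functor m.toNat).obj x := by
  show (iterFun e.inverse (-m).toNat).obj ((iterFun e.functor m.toNat).obj x) = _
  rw [Int.toNat_of_nonpos (by omega : -m ≤ 0)]
  rfl

lemma myPow_obj_nonpos (e : D ≌ D) {m : ℤ} (hm : m ≤ 0) (x : D) :
    (myPow e m).obj x = (iterFun e.inverse (-m).toNat).obj x := by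
  show (iterFun e.inverse (-m).toNat).obj ((iterFun e.functor m.toNat).obj x) = _
  rw [Int.toNat_of_nonpos hm]
  rfl

lemma myPow_zero_obj (e : D ≌ D) (x : D) : (myPow e 0).obj x = x := rfl

lemma myPow_succ_iso (e : D ≌ D) (m : ℤ) (x : D) :
    Nonempty ((myPow e (m + 1)).obj x ≅ e.functor.obj ((myPow e m).obj x)) := by
  rcases le_or_gt 0 m with hm | hm
  · have h1 : (myPow e (m + 1)).obj x = (iterFun e.functor ((m + 1).toNat)).obj x :=
      myPow_obj_nonneg e (by omega) x
    have h2 : (myPow e m).obj x = (iterFun e.functor m.toNat).obj x :=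
      myPow_obj_nonneg e hm x
    have h3 : (m + 1).toNat = m.toNat + 1 := by omega
    rw [h1, h2, h3]
    exact ⟨Iso.refl _⟩
  · have h1 : (myPow e (m + 1)).obj x = (iterFun e.inverse ((-(m + 1)).toNat)).obj x :=
      myPow_obj_nonpos e (by omega) x
    have h2 : (myPow e m).obj x = (iterFun e.inverse ((-m).toNat)).obj x :=
      myPow_obj_nonpos e (by omega) x
    have h3 : (-m).toNat = (-(m + 1)).toNat + 1 := by omega
    rw [h1, h2, h3]
    exact ⟨(e.counitIso.app _).symm⟩

lemma myPow_pred_iso (e : D ≌ D) (m : ℤ) (x : D) :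
    Nonempty ((myPow e (m - 1)).obj x ≅ e.inverse.obj ((myPow e m).obj x)) := by
  rcases le_or_gt m 0 with hm | hm
  · have h1 : (myPow e (m - 1)).obj x = (iterFun e.inverse ((-(m - 1)).toNat)).obj x :=
      myPow_obj_nonpos e (by omega) x
    have h2 : (myPow e m).obj x = (iterFun e.inverse ((-m).toNat)).obj x :=
      myPow_obj_nonpos e hm x
    have h3 : (-(m - 1)).toNat = (-m).toNat + 1 := by omega
    rw [h1, h2, h3]
    exact ⟨Iso.refl _⟩
  · have h1 : (myPow e (m - 1)).obj x = (iterFun e.functor ((m - 1).toNat)).obj x :=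
      myPow_obj_nonneg e (by omega) x
    have h2 : (myPow e m).obj x = (iterFun e.functor m.toNat).obj x :=
      myPow_obj_nonneg e (by omega) x
    have h3 : m.toNat = (m - 1).toNat + 1 := by omega
    rw [h1, h2, h3]
    exact ⟨e.unitIso.app _⟩

lemma ZH_myPow_translate (e : D ≌ D) [e.functor.Additive] {a b : D} (d : ℤ)
    (h : ZH a ((myPow e d).obj b)) :
    ∀ m : ℤ, ZH ((myPow e m).obj a) ((myPow e (m + d)).obj b) := by
  intro m
  induction m using Int.induction_on with
  | zero =>
      rw [zero_add]
      exact ZH_of_iso (eqToIso (myPow_zero_obj e a)) (Iso.refl _) h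
  | succ i ih =>
      obtain ⟨α⟩ := myPow_succ_iso e (i : ℤ) a
      obtain ⟨β⟩ := myPow_succ_iso e ((i : ℤ) + d) b
      have hb : ((i : ℤ) + 1 + d) = ((i : ℤ) + d) + 1 := by omega
      refine ZH_of_iso α ?_ (ZH_map e.functor ih)
      rw [hb]; exact β
  | pred i ih =>
      obtain ⟨α⟩ := myPow_pred_iso e (-(i : ℤ)) a
      obtain ⟨β⟩ := myPow_pred_iso e (-(i : ℤ) + d) b
      have hb : (-(i : ℤ) - 1 + d) = (-(i : ℤ) + d) - 1 := by omega
      refine ZH_of_iso α ?_ (ZH_map e.inverse ih)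
      rw [hb]; exact β

namespace HereditarySetup

variable {nn : ℕ} (HS : HereditarySetup k D nn)

lemma Xtest {d : D} (h : ∀ y ∈ HS.Y, ZH d y) : d ∈ HS.X := by
  obtain ⟨a, b, f, g, hcone, ha, hb, hT⟩ := HS.tstr.decomp d
  obtain ⟨v, hv⟩ := Triangle.coyoneda_exact₂ _ hT (𝟙 d)
    (by show 𝟙 d ≫ g = 0; rw [Category.id_comp]; exact h b hb g)
  exact HS.tstr.retractX v f hv.symm ha

lemma Ytest {d : D} (h : ∀ x ∈ HS.X, ZH x d) : d ∈ HS.Y := by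
  obtain ⟨a, b, f, g, hcone, ha, hb, hT⟩ := HS.tstr.decomp d
  obtain ⟨v, hv⟩ := Triangle.yoneda_exact₂ _ hT (𝟙 d)
    (by show f ≫ 𝟙 d = 0; rw [Category.comp_id]; exact h a ha f)
  exact HS.tstr.retractY g v hv.symm hb

lemma zeroX {d : D} (hd : IsZero d) : d ∈ HS.X :=
  HS.Xtest (fun _ _ f => hd.eq_of_src f 0)

lemma zeroY {d : D} (hd : IsZero d) : d ∈ HS.Y :=
  HS.Ytest (fun _ _ f => hd.eq_of_tgt f 0)

lemma Xshift {x : D} (hx : x ∈ HS.X) : ∀ m : ℤ, 0 ≤ m → x⟦m⟧ ∈ HS.X := by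
  have key : ∀ r : ℕ, x⟦(r : ℤ)⟧ ∈ HS.X := by
    intro r
    induction r with
    | zero =>
        rw [Nat.cast_zero]
        exact mem_of_iso HS.tstr.retractX ((shiftFunctorZero D ℤ).app x) hx
    | succ r ih =>
        rw [show ((r + 1 : ℕ) : ℤ) = (r : ℤ) + 1 by push_cast; ring]
        exact mem_of_iso HS.tstr.retractX (shiftAdd x (r : ℤ) 1) (HS.tstr.shiftX _ ih)
  intro m hm
  rw [show m = ((m.toNat : ℕ) : ℤ) by omega]
  exact key m.toNat

lemma Yshift1 {y : D} (hy : y ∈ HS.Y) : y⟦(-1 : ℤ)⟧ ∈ HS.Y := by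
  apply HS.Ytest
  intro x hx f
  have h1 : (shiftFunctor D (1 : ℤ)).map f ≫
      ((shiftFunctorCompIsoId D (-1) 1 (by omega)).hom.app y) = 0 :=
    HS.tstr.homZero _ (HS.tstr.shiftX x hx) _ hy _
  have h2 : (shiftFunctor D (1 : ℤ)).map f = 0 := by
    rw [← cancel_mono ((shiftFunctorCompIsoId D (-1) 1 (by omega)).hom.app y), zero_comp]
    exact h1
  exact (shiftFunctor D (1 : ℤ)).map_injective (by rw [h2, Functor.map_zero])

lemma Yshift {y : D} (hy : y ∈ HS.Y) : ∀ m : ℤ, m ≤ 0 → y⟦m⟧ ∈ HS.Y := by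
  have key : ∀ r : ℕ, y⟦-(r : ℤ)⟧ ∈ HS.Y := by
    intro r
    induction r with
    | zero =>
        rw [show -((0 : ℕ) : ℤ) = 0 by norm_num]
        exact mem_of_iso HS.tstr.retractY ((shiftFunctorZero D ℤ).app y) hy
    | succ r ih =>
        rw [show -((r + 1 : ℕ) : ℤ) = -(r : ℤ) + -1 by push_cast; ring]
        exact mem_of_iso HS.tstr.retractY (shiftAdd y (-(r : ℤ)) (-1)) (HS.Yshift1 ih)
  intro m hm
  rw [show m = -(((-m).toNat : ℕ) : ℤ) by omega]
  exact key (-m).toNat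

lemma memX_shift0 {x : D} (hx : x ∈ HS.X) : x⟦(0 : ℤ)⟧ ∈ HS.X :=
  mem_of_iso HS.tstr.retractX ((shiftFunctorZero D ℤ).app x) hx

lemma memY_shift0 {y : D} (hy : y ∈ HS.Y) : y⟦(0 : ℤ)⟧ ∈ HS.Y :=
  mem_of_iso HS.tstr.retractY ((shiftFunctorZero D ℤ).app y) hy

lemma heartShiftX {h : D} (hh : h ∈ heart HS.X HS.Y) {m : ℤ} (hm : 0 ≤ m) : h⟦m⟧ ∈ HS.X :=
  HS.Xshift hh.1 m hm

lemma heartShiftY {h : D} (hh : h ∈ heart HS.X HS.Y) {m : ℤ} (hm : m ≤ -1) : h⟦m⟧ ∈ HS.Y := by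
  refine mem_of_iso HS.tstr.retractY ((shiftFunctorAdd' D (-1) (m + 1) m (by omega)).app h) ?_
  exact HS.Yshift hh.2 (m + 1) (by omega)

lemma Xbiprod {m : ℕ} (p : Fin m → D) (hp : ∀ i, p i ∈ HS.X) : (⨁ p) ∈ HS.X := by
  apply HS.Xtest
  intro y hy f
  refine biproduct.hom_ext' f 0 (fun j => ?_)
  rw [comp_zero]
  exact HS.tstr.homZero _ (hp j) _ hy _

lemma Ybiprod {m : ℕ} (p : Fin m → D) (hp : ∀ i, p i ∈ HS.Y) : (⨁ p) ∈ HS.Y := by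
  apply HS.Ytest
  intro x hx f
  refine biproduct.hom_ext f 0 (fun j => ?_)
  rw [zero_comp]
  exact HS.tstr.homZero _ hx _ (hp j) _

lemma serre2 {a b : D} (h : ZH a b) : ZH b (HS.serreF.obj a) := by
  intro g
  by_contra hg
  obtain ⟨φ, hφ⟩ : ∃ φ : Module.Dual k (b ⟶ HS.serreF.obj a), φ g ≠ 0 := by
    by_contra hall
    push_neg at hall
    exact hg ((Module.forall_dual_apply_eq_zero_iff k g).mp hall)
  obtain ⟨f, hf, -⟩ := HS.serre_duality a b φ
  have h1 := hf g
  rw [h f, zero_comp, map_zero] at h1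
  exact hφ h1.symm

lemma serrePiece {p q : D} {s t : ℤ} (hp : p⟦s⟧ ∈ heart HS.X HS.Y)
    (hq : q⟦t⟧ ∈ heart HS.X HS.Y)
    (ι : q ⟶ HS.serreF.obj p) (ρ : HS.serreF.obj p ⟶ q) (hιρ : ι ≫ ρ = 𝟙 q) :
    IsZero q ∨ (s - 1 ≤ t ∧ t ≤ s) := by
  by_cases hb : s - 1 ≤ t ∧ t ≤ s
  · exact Or.inr hb
  · left
    have hzh : ZH (p⟦s⟧) ((q⟦t⟧)⟦s - t⟧) :=
      fun f => HS.hereditary _ hp _ hq (s - t) (by omega) (by omega) f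
    have hz : ZH p q := by
      apply ZH_of_map (shiftFunctor D s)
      exact ZH_of_iso (Iso.refl _) ((shiftFunctorAdd' D t (s - t) s (by omega)).app q) hzh
    have hι : ι = 0 := HS.serre2 hz ι
    rw [IsZero.iff_id_eq_zero, ← hιρ, hι, zero_comp]

lemma retract_pieceX {x p : D} {t s : ℤ} (hx : x⟦t⟧ ∈ HS.X)
    (hp : p⟦s⟧ ∈ heart HS.X HS.Y)
    (ι : p ⟶ x) (ρ : x ⟶ p) (hιρ : ι ≫ ρ = 𝟙 p) : IsZero p ∨ s ≤ t := by
  by_cases hs : s ≤ t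
  · exact Or.inr hs
  · left
    have h1 : p⟦t⟧ ∈ HS.X :=
      HS.tstr.retractX ((shiftFunctor D t).map ι) ((shiftFunctor D t).map ρ)
        (by rw [← CategoryTheory.Functor.map_comp, hιρ, CategoryTheory.Functor.map_id]) hx
    have h2 : p⟦t⟧ ∈ HS.Y :=
      mem_of_iso HS.tstr.retractY ((shiftFunctorAdd' D s (t - s) t (by omega)).app p)
        (HS.heartShiftY hp (by omega))
    have h3 : IsZero (p⟦t⟧) := by
      rw [IsZero.iff_id_eq_zero]
      exact HS.tstr.homZero _ h1 _ h2 _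
    have h4 : IsZero ((p⟦t⟧)⟦-t⟧) := (shiftFunctor D (-t)).map_isZero h3
    exact h4.of_iso (((shiftFunctorCompIsoId D t (-t) (by omega)).app p).symm)

lemma retract_pieceY {x p : D} {t s : ℤ} (hx : x⟦t⟧ ∈ HS.Y)
    (hp : p⟦s⟧ ∈ heart HS.X HS.Y)
    (ι : p ⟶ x) (ρ : x ⟶ p) (hιρ : ι ≫ ρ = 𝟙 p) : IsZero p ∨ t + 1 ≤ s := by
  by_cases hs : t + 1 ≤ s
  · exact Or.inr hs
  · left
    have h1 : p⟦t⟧ ∈ HS.Y :=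
      HS.tstr.retractY ((shiftFunctor D t).map ι) ((shiftFunctor D t).map ρ)
        (by rw [← CategoryTheory.Functor.map_comp, hιρ, CategoryTheory.Functor.map_id]) hx
    have h2 : p⟦t⟧ ∈ HS.X :=
      mem_of_iso HS.tstr.retractX ((shiftFunctorAdd' D s (t - s) t (by omega)).app p)
        (HS.heartShiftX hp (by omega))
    have h3 : IsZero (p⟦t⟧) := by
      rw [IsZero.iff_id_eq_zero]
      exact HS.tstr.homZero _ h2 _ h1 _
    have h4 : IsZero ((p⟦t⟧)⟦-t⟧) := (shiftFunctor D (-t)).map_isZero h3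
    exact h4.of_iso (((shiftFunctorCompIsoId D t (-t) (by omega)).app p).symm)

lemma shiftSplit (v : D) (b : ℤ) :
    ∃ (m : ℕ) (q : Fin m → D),
      (∀ i, (∃ t : ℤ, (q i)⟦t⟧ ∈ heart HS.X HS.Y) ∧
        ∃ (ι : q i ⟶ v) (ρ : v ⟶ q i), ι ≫ ρ = 𝟙 (q i)) ∧
      Nonempty ((v⟦b⟧) ≅ ⨁ (fun i => (q i)⟦b⟧)) := by
  obtain ⟨m, q, hq, ⟨φ⟩⟩ := HS.splitting v
  exact ⟨m, q, fun i => ⟨hq i, biproduct.ι q i ≫ φ.inv, φ.hom ≫ biproduct.π q i, by simp⟩,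
    ⟨(shiftFunctor D b).mapIso φ ≪≫ (shiftFunctor D b).mapBiproduct q⟩⟩

lemma serreShiftSplit (u : D) (b : ℤ) :
    ∃ (m : ℕ) (p : Fin m → D),
      (∀ i, (∃ s : ℤ, (p i)⟦s⟧ ∈ heart HS.X HS.Y) ∧
        ∃ (ι : p i ⟶ u) (ρ : u ⟶ p i), ι ≫ ρ = 𝟙 (p i)) ∧
      Nonempty (((HS.serreF.obj u)⟦b⟧) ≅ ⨁ (fun i => (HS.serreF.obj (p i))⟦b⟧)) := by
  haveI := HS.serre_additive
  obtain ⟨m, p, hp, ⟨φ⟩⟩ := HS.splitting u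
  exact ⟨m, p, fun i => ⟨hp i, biproduct.ι p i ≫ φ.inv, φ.hom ≫ biproduct.π p i, by simp⟩,
    ⟨(shiftFunctor D b).mapIso ((HS.serreF.mapIso φ) ≪≫ HS.serreF.mapBiproduct p) ≪≫
      (shiftFunctor D b).mapBiproduct (fun i => HS.serreF.obj (p i))⟩⟩

lemma SHX {p : D} {s b : ℤ} (hs : p⟦s⟧ ∈ heart HS.X HS.Y) (hb : s ≤ b) :
    (HS.serreF.obj p)⟦b⟧ ∈ HS.X := by
  obtain ⟨m, q, hq, ⟨φ⟩⟩ := HS.shiftSplit (HS.serreF.obj p) b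
  refine mem_of_iso HS.tstr.retractX φ (HS.Xbiprod _ (fun j => ?_))
  obtain ⟨⟨t, ht⟩, ι, ρ, hιρ⟩ := hq j
  rcases HS.serrePiece hs ht ι ρ hιρ with hz | ⟨h1, h2⟩
  · exact HS.zeroX ((shiftFunctor D b).map_isZero hz)
  · exact mem_of_iso HS.tstr.retractX ((shiftFunctorAdd' D t (b - t) b (by omega)).app (q j))
      (HS.heartShiftX ht (by omega))

lemma SHY {p : D} {s b : ℤ} (hs : p⟦s⟧ ∈ heart HS.X HS.Y) (hb : b ≤ s - 2) :
    (HS.serreF.obj p)⟦b⟧ ∈ HS.Y := by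
  obtain ⟨m, q, hq, ⟨φ⟩⟩ := HS.shiftSplit (HS.serreF.obj p) b
  refine mem_of_iso HS.tstr.retractY φ (HS.Ybiprod _ (fun j => ?_))
  obtain ⟨⟨t, ht⟩, ι, ρ, hιρ⟩ := hq j
  rcases HS.serrePiece hs ht ι ρ hιρ with hz | ⟨h1, h2⟩
  · exact HS.zeroY ((shiftFunctor D b).map_isZero hz)
  · exact mem_of_iso HS.tstr.retractY ((shiftFunctorAdd' D t (b - t) b (by omega)).app (q j))
      (HS.heartShiftY ht (by omega))

lemma SXgen {u : D} {t b : ℤ} (hu : u⟦t⟧ ∈ HS.X) (hb : t ≤ b) :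
    (HS.serreF.obj u)⟦b⟧ ∈ HS.X := by
  haveI := HS.serre_additive
  obtain ⟨m, p, hp, ⟨φ⟩⟩ := HS.serreShiftSplit u b
  refine mem_of_iso HS.tstr.retractX φ (HS.Xbiprod _ (fun i => ?_))
  obtain ⟨⟨s, hs⟩, ι, ρ, hιρ⟩ := hp i
  rcases HS.retract_pieceX hu hs ι ρ hιρ with hz | hst
  · exact HS.zeroX ((shiftFunctor D b).map_isZero (HS.serreF.map_isZero hz))
  · exact HS.SHX hs (by omega)

lemma SYgen {u : D} {t b : ℤ} (hu : u⟦t⟧ ∈ HS.Y) (hb : b ≤ t - 1) :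
    (HS.serreF.obj u)⟦b⟧ ∈ HS.Y := by
  haveI := HS.serre_additive
  obtain ⟨m, p, hp, ⟨φ⟩⟩ := HS.serreShiftSplit u b
  refine mem_of_iso HS.tstr.retractY φ (HS.Ybiprod _ (fun i => ?_))
  obtain ⟨⟨s, hs⟩, ι, ρ, hιρ⟩ := hp i
  rcases HS.retract_pieceY hu hs ι ρ hιρ with hz | hst
  · exact HS.zeroY ((shiftFunctor D b).map_isZero (HS.serreF.map_isZero hz))
  · exact HS.SHY hs (by omega)

/-- the equivalence `F = Σ^w ∘ 𝕊` -/
noncomputable def FEquiv (w : ℕ) : D ≌ D :=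
  letI := HS.serre_equivalence
  letI : (HS.F w).IsEquivalence :=
    inferInstanceAs ((HS.serreF ⋙ shiftFunctor D (w : ℤ)).IsEquivalence)
  (HS.F w).asEquivalence

lemma FXY (w : ℕ) {x y : D} (hx : x ∈ HS.X) (hy : y ∈ HS.Y) : ZH ((HS.F w).obj x) y := by
  intro f
  have hmem : (HS.serreF.obj x)⟦(w : ℤ)⟧ ∈ HS.X :=
    HS.SXgen (HS.memX_shift0 hx) (by omega)
  exact HS.tstr.homZero _ hmem _ hy f

lemma GY (w : ℕ) {y : D} (hy : y ∈ HS.Y) : (HS.FEquiv w).inverse.obj y ∈ HS.Y := by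
  haveI := HS.serre_additive
  haveI : (HS.F w).Additive := inferInstanceAs ((HS.serreF ⋙ shiftFunctor D (w : ℤ)).Additive)
  apply HS.Ytest
  intro x hx f
  have h1 : (HS.FEquiv w).functor.map f ≫ ((HS.FEquiv w).counitIso.app y).hom = 0 :=
    HS.FXY w hx hy _
  have h2 : (HS.FEquiv w).functor.map f = 0 := by
    rw [← cancel_mono (((HS.FEquiv w).counitIso.app y).hom), zero_comp]
    exact h1
  have h3 : (HS.F w).map f = 0 := h2
  exact (HS.FEquiv w).functor.map_injective (by rw [h2]; exact (Functor.map_zero _ _ _).symm)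

lemma GYiter (w : ℕ) {s' y : D} (hy : y ∈ HS.Y) (σ : s' ≅ (HS.F w).obj y) :
    ∀ r : ℕ, 1 ≤ r → (iterFun (HS.FEquiv w).inverse r).obj s' ∈ HS.Y := by
  intro r hr
  induction r with
  | zero => omega
  | succ r ih =>
      rcases Nat.eq_zero_or_pos r with h0 | h1
      · subst h0
        exact mem_of_iso HS.tstr.retractY
          ((HS.FEquiv w).inverse.mapIso σ ≪≫ ((HS.FEquiv w).unitIso.app y).symm) hy
      · exact HS.GY w (ih h1)

lemma NEG (w : ℕ) {s s' y : D} (hsX : s ∈ HS.X) (hy : y ∈ HS.Y) (σ : s' ≅ (HS.F w).obj y) :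
    ∀ r : ℕ, 1 ≤ r → ZH s ((iterFun (HS.FEquiv w).inverse r).obj s') :=
  fun r hr f => HS.tstr.homZero _ hsX _ (HS.GYiter w hy σ r hr) f

lemma P1 (w : ℕ) (hw : 1 ≤ w) {x : D} (hx : x ∈ HS.X) :
    ∀ m : ℕ, 1 ≤ m → ((iterFun (HS.F w) m).obj x)⟦(-1 : ℤ)⟧ ∈ HS.X := by
  have key : ∀ u : D, ∀ t : ℤ, t ≤ 0 → u⟦t⟧ ∈ HS.X →
      ((HS.F w).obj u)⟦(-1 : ℤ)⟧ ∈ HS.X := by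
    intro u t ht hu
    refine mem_of_iso HS.tstr.retractX
      (((shiftFunctorAdd' D ((w : ℤ)) (-1) ((w : ℤ) - 1) (by omega)).app
        (HS.serreF.obj u)).symm) ?_
    exact HS.SXgen hu (by omega)
  intro m hm
  induction m with
  | zero => omega
  | succ m ih =>
      rcases Nat.eq_zero_or_pos m with h0 | h1
      · subst h0
        exact key x 0 le_rfl (HS.memX_shift0 hx)
      · exact key _ (-1) (by omega) (ih h1)

lemma P2 (w : ℕ) {s y : D} (hy : y ∈ HS.Y) (σ : s ≅ (HS.F w).obj y) :
    s⟦-(w : ℤ) - 1⟧ ∈ HS.Y := by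
  refine mem_of_iso HS.tstr.retractY ((shiftFunctor D (-(w : ℤ) - 1)).mapIso σ ≪≫
    ((shiftFunctorAdd' D ((w : ℤ)) (-(w : ℤ) - 1) (-1) (by omega)).app
      (HS.serreF.obj y)).symm) ?_
  exact HS.SYgen (HS.memY_shift0 hy) (by omega)

lemma POSS (w : ℕ) (hw : 1 ≤ w) {s s' : D}
    (hsX : s ∈ HS.X) (hsY : s⟦-(w : ℤ) - 1⟧ ∈ HS.Y) (hs'X : s' ∈ HS.X)
    (horth : ∀ m : ℤ, 1 ≤ m → ZH (s'⟦m⟧) s)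
    (j : ℤ) (hj1 : (w : ℤ) ≤ j) (hj2 : j ≤ (w : ℤ) + 1) :
    ∀ r : ℕ, 1 ≤ r → ZH s ((HS.serreF.obj ((iterFun (HS.F w) (r - 1)).obj s'))⟦j⟧) := by
  have red : ∀ u : D, ZH u (s⟦-j⟧) → ZH s ((HS.serreF.obj u)⟦j⟧) := by
    intro u h
    apply ZH_of_map (shiftFunctor D (-j))
    exact ZH_of_iso (Iso.refl _)
      ((shiftFunctorCompIsoId D j (-j) (by omega)).app (HS.serreF.obj u)) (HS.serre2 h)
  intro r hr
  rcases Nat.lt_or_ge r 2 with h2 | h2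
  · have e0 : r - 1 = 0 := by omega
    rw [e0]
    apply red
    apply ZH_of_map (shiftFunctor D j)
    exact ZH_of_iso (Iso.refl _)
      ((shiftFunctorCompIsoId D (-j) j (by omega)).app s) (horth j (by omega))
  · apply red
    have hP1 : ((iterFun (HS.F w) (r - 1)).obj s')⟦(-1 : ℤ)⟧ ∈ HS.X :=
      HS.P1 w hw hs'X (r - 1) (by omega)
    have hmem : s⟦-j - 1⟧ ∈ HS.Y :=
      mem_of_iso HS.tstr.retractY
        ((shiftFunctorAdd' D (-(w : ℤ) - 1) ((w : ℤ) - j) (-j - 1) (by omega)).app s)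
        (HS.Yshift hsY ((w : ℤ) - j) (by omega))
    apply ZH_of_map (shiftFunctor D (-1))
    exact ZH_of_iso (Iso.refl _)
      (((shiftFunctorAdd' D (-j) (-1) (-j - 1) (by omega)).app s).symm)
      (fun f => HS.tstr.homZero _ hP1 _ hmem f)

end HereditarySetup

lemma pow_iso {nn : ℕ} (HS : HereditarySetup k D nn) (w : ℕ) (FP : FPowData HS w) :
    ∀ (m : ℤ) (x : D), Nonempty ((FP.pow m).obj x ≅ (myPow (HS.FEquiv w) m).obj x) := by
  intro m
  induction m using Int.induction_on with
  | zero =>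
      intro x
      exact ⟨FP.pow_zero.app x ≪≫ eqToIso (myPow_zero_obj _ x).symm⟩
  | succ i ih =>
      intro x
      obtain ⟨α⟩ := ih x
      obtain ⟨β⟩ := myPow_succ_iso (HS.FEquiv w) (i : ℤ) x
      exact ⟨(FP.pow_succ (i : ℤ)).app x ≪≫ (HS.F w).mapIso α ≪≫ β.symm⟩
  | pred i ih =>
      intro x
      obtain ⟨α⟩ := ih x
      obtain ⟨β⟩ := myPow_pred_iso (HS.FEquiv w) (-(i : ℤ)) x
      have hσ : (FP.pow (-(i : ℤ))).obj x ≅ (HS.F w).obj ((FP.pow (-(i : ℤ) - 1)).obj x) :=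
        eqToIso (by rw [show (-(i : ℤ) - 1) + 1 = -(i : ℤ) from by ring]) ≪≫
          (FP.pow_succ (-(i : ℤ) - 1)).app x
      exact ⟨(HS.FEquiv w).unitIso.app _ ≪≫
        (HS.FEquiv w).inverse.mapIso (hσ.symm ≪≫ α) ≪≫ β.symm⟩

lemma end_scalar {A B : D} (P : D ⥤ D) [P.Full] [P.Faithful] [P.Additive] (α : A ≅ P.obj B)
    (hsc : ∀ g : B ⟶ B, ∃ c : k, g = c • 𝟙 B) (hne : 𝟙 B ≠ (0 : B ⟶ B))
    (hfin : FiniteDimensional k (A ⟶ A)) :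
    (∀ f : A ⟶ A, ∃ c : k, f = c • 𝟙 A) ∧ 𝟙 A ≠ (0 : A ⟶ A) := by
  have hneA : 𝟙 A ≠ (0 : A ⟶ A) := by
    intro h0
    apply hne
    apply P.map_injective
    rw [CategoryTheory.Functor.map_id, Functor.map_zero]
    calc 𝟙 (P.obj B) = α.inv ≫ 𝟙 A ≫ α.hom := by simp
    _ = 0 := by rw [h0]; simp
  have dich : ∀ f : A ⟶ A, f = 0 ∨ IsIso f := by
    intro f
    obtain ⟨g, hg⟩ := P.map_surjective (α.inv ≫ f ≫ α.hom)
    obtain ⟨c, hc⟩ := hsc g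
    by_cases hc0 : c = 0
    · left
      have hgz : g = 0 := by rw [hc, hc0, zero_smul]
      have h2 : α.inv ≫ f ≫ α.hom = 0 := by rw [← hg, hgz, Functor.map_zero]
      calc f = α.hom ≫ (α.inv ≫ f ≫ α.hom) ≫ α.inv := by simp
      _ = 0 := by rw [h2]; simp
    · right
      have hgi : IsIso g := by
        refine ⟨c⁻¹ • 𝟙 B, ?_, ?_⟩
        · rw [hc]; simp [smul_smul, mul_inv_cancel₀ hc0, inv_mul_cancel₀ hc0]
        · rw [hc]; simp [smul_smul, mul_inv_cancel₀ hc0, inv_mul_cancel₀ hc0]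
      have hP : IsIso (α.inv ≫ f ≫ α.hom) := by
        rw [← hg]; infer_instance
      have hfe : f = α.hom ≫ (α.inv ≫ f ≫ α.hom) ≫ α.inv := by simp
      rw [hfe]
      infer_instance
  refine ⟨fun f => ?_, hneA⟩
  haveI : Nontrivial (End A) := ⟨𝟙 A, 0, hneA⟩
  haveI : Module.Finite k (End A) := hfin
  set x : End A := f with hxf
  have hint : IsIntegral k x := IsIntegral.of_finite k x
  have hdeg : 0 < (minpoly k x).natDegree := minpoly.natDegree_pos hint
  obtain ⟨c, hc⟩ := IsAlgClosed.exists_root (k := k) (minpoly k x) (by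
    intro h
    rw [Polynomial.degree_eq_natDegree (minpoly.ne_zero hint)] at h
    simp only [Nat.cast_eq_zero] at h
    omega)
  obtain ⟨q, hq⟩ := Polynomial.dvd_iff_isRoot.mpr hc
  have haev := minpoly.aeval k x
  rw [hq, map_mul] at haev
  have hxc : Polynomial.aeval x (Polynomial.X - Polynomial.C c) =
      x - (algebraMap k (End A)) c := by
    simp
  rw [hxc] at haev
  by_cases hzz : x - (algebraMap k (End A)) c = 0
  · refine ⟨c, ?_⟩
    have h2 : x = (algebraMap k (End A)) c := by rwa [sub_eq_zero] at hzz
    rw [Algebra.algebraMap_eq_smul_one] at h2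
    exact h2
  · exfalso
    rcases dich (x - (algebraMap k (End A)) c) with h0 | hiso
    · exact hzz h0
    · have hu : IsUnit (x - (algebraMap k (End A)) c) :=
        (CategoryTheory.isUnit_iff_isIso _).mpr hiso
      have hQ : Polynomial.aeval x q = 0 := (hu.mul_right_eq_zero).mp haev
      have hdvd : minpoly k x ∣ q := minpoly.dvd k _ hQ
      have hq0 : q ≠ 0 := by
        intro h0
        apply minpoly.ne_zero hint
        rw [hq, h0, mul_zero]
      have hle := Polynomial.natDegree_le_of_dvd hdvd hq0
      have hmul : (minpoly k x).natDegree = 1 + q.natDegree := by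
        rw [hq, Polynomial.natDegree_mul (Polynomial.X_sub_C_ne_zero c) hq0,
          Polynomial.natDegree_X_sub_C]
      omega

/-- Lemma 4.2 of the paper. -/
theorem statement_7 {n : ℕ} (HS : HereditarySetup k D n) (w : ℕ) (hw : 1 ≤ w)
    (FP : FPowData HS w)
    (S : Set D) (hS : IsInfOrthogonal k S) (hSfd : S ⊆ HS.fd w) :
    -- (1) `{Fᵐ s ∣ m ∈ ℤ, s ∈ S}` is an orthogonal collection
    ((∀ (m m' : ℤ) (s s' : D), s ∈ S → s' ∈ S → (m ≠ m' ∨ s ≠ s') →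
        ∀ f : (FP.pow m).obj s ⟶ (FP.pow m').obj s', f = 0) ∧
      (∀ (m : ℤ) (s : D), s ∈ S →
        ∀ f : (FP.pow m).obj s ⟶ (FP.pow m).obj s,
          ∃ c : k, f = c • 𝟙 ((FP.pow m).obj s)) ∧
      (∀ (m : ℤ) (s : D), s ∈ S → 𝟙 ((FP.pow m).obj s) ≠ 0)) ∧
    -- (2) `Ext¹(S, Fᵐ S) = Hom(S, Σ Fᵐ S) = 0` for all `m ≥ 1`
    (∀ m : ℤ, 1 ≤ m → ∀ s ∈ S, ∀ s' ∈ S,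
      ∀ f : s ⟶ ((FP.pow m).obj s')⟦(1 : ℤ)⟧, f = 0) := by
  haveI := HS.serre_additive
  haveI := HS.serre_equivalence
  haveI hFa : (HS.F w).Additive :=
    inferInstanceAs ((HS.serreF ⋙ shiftFunctor D (w : ℤ)).Additive)
  haveI hFe : (HS.F w).IsEquivalence :=
    inferInstanceAs ((HS.serreF ⋙ shiftFunctor D (w : ℤ)).IsEquivalence)
  haveI hEfa : (HS.FEquiv w).functor.Additive := hFa
  obtain ⟨⟨hOrthNe, hEnd, hNe⟩, hInf⟩ := hS
  refine ⟨⟨?_, ?_, ?_⟩, ?_⟩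
  · -- (1) pairwise orthogonality
    intro m m' s s' hs hs' hcond
    obtain ⟨hsX, ys, hys, ⟨σs⟩⟩ := hSfd hs
    obtain ⟨hs'X, ys', hys', ⟨σs'⟩⟩ := hSfd hs'
    have hd : ZH s ((myPow (HS.FEquiv w) (m' - m)).obj s') := by
      rcases lt_trichotomy (m' - m) 0 with hlt | heq | hgt
      · rw [myPow_obj_nonpos (HS.FEquiv w) (by omega) s']
        exact HS.NEG w hsX hys' σs' ((-(m' - m)).toNat) (by omega)
      · rw [heq, myPow_zero_obj]
        have hss : s ≠ s' := by
          rcases hcond with h | h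
          · exact absurd (by omega : m = m') h
          · exact h
        exact hOrthNe s hs s' hs' hss
      · rw [myPow_obj_nonneg (HS.FEquiv w) (by omega) s']
        have hr1 : 1 ≤ (m' - m).toNat := by omega
        rw [show (m' - m).toNat = ((m' - m).toNat - 1) + 1 from by omega]
        exact HS.POSS w hw hsX (HS.P2 w hys σs) hs'X
          (fun mm hmm ff => hInf s' hs' s hs mm hmm ff)
          (w : ℤ) le_rfl (by omega) ((m' - m).toNat) hr1
      -- note: goal after rw is about iterFun (HS.FEquiv w).functor; POSS concerns HS.F w
    have htr := ZH_myPow_translate (HS.FEquiv w) (m' - m) hd m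
    rw [show m + (m' - m) = m' from by ring] at htr
    obtain ⟨α⟩ := pow_iso HS w FP m s
    obtain ⟨β⟩ := pow_iso HS w FP m' s'
    exact ZH_of_iso α β htr
  · -- (1) endomorphisms are scalars
    intro m s hs
    obtain ⟨α⟩ := pow_iso HS w FP m s
    haveI := myPow_additive (HS.FEquiv w) m
    haveI := myPow_full (HS.FEquiv w) m
    haveI := myPow_faithful (HS.FEquiv w) m
    exact (end_scalar (myPow (HS.FEquiv w) m) α (hEnd s hs) (hNe s hs)
      (HS.homFinite _ _)).1
  · -- (1) identities are nonzero
    intro m s hs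
    obtain ⟨α⟩ := pow_iso HS w FP m s
    haveI := myPow_additive (HS.FEquiv w) m
    haveI := myPow_full (HS.FEquiv w) m
    haveI := myPow_faithful (HS.FEquiv w) m
    exact (end_scalar (myPow (HS.FEquiv w) m) α (hEnd s hs) (hNe s hs)
      (HS.homFinite _ _)).2
  · -- (2) Ext-vanishing
    intro m hm s hs s' hs'
    obtain ⟨hsX, ys, hys, ⟨σs⟩⟩ := hSfd hs
    obtain ⟨hs'X, ys', hys', ⟨σs'⟩⟩ := hSfd hs'
    obtain ⟨β⟩ := pow_iso HS w FP m s'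
    have hZ : ZH s (((myPow (HS.FEquiv w) m).obj s')⟦(1 : ℤ)⟧) := by
      rw [myPow_obj_nonneg (HS.FEquiv w) (by omega) s']
      have hr1 : 1 ≤ m.toNat := by omega
      rw [show m.toNat = (m.toNat - 1) + 1 from by omega]
      have hPO := HS.POSS w hw hsX (HS.P2 w hys σs) hs'X
        (fun mm hmm ff => hInf s' hs' s hs mm hmm ff)
        ((w : ℤ) + 1) (by omega) le_rfl m.toNat hr1
      exact ZH_of_iso (Iso.refl _)
        (((shiftFunctorAdd' D (w : ℤ) 1 ((w : ℤ) + 1) rfl).app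
          (HS.serreF.obj ((iterFun (HS.F w) (m.toNat - 1)).obj s'))).symm) hPO
    exact fun f => ZH_of_iso (Iso.refl s) ((shiftFunctor D (1 : ℤ)).mapIso β) hZ f

end Paper
end

section
/- Let S be an ∞-orthogonal collection of D^b(kQ) contained in the fundamental domain F_{−w}. Then for all n ≥ 1, ⟨F^n S⟩ * ⟨S⟩ ⊆ ⟨S⟩ * ⟨F^n S⟩, where ⟨−⟩ denotes extension closure in D^b(kQ); indeed every object of ⟨F^n S⟩ * ⟨S⟩ is a direct sum of an object of ⟨S⟩ and an object of ⟨F^n S⟩. -/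
namespace Paper

open CategoryTheory Limits Pretriangulated Opposite

universe w v u

variable {k : Type w} [Field k] [IsAlgClosed k]
variable {D : Type u} [Category.{v} D] [Preadditive D] [HasZeroObject D]
  [HasShift D ℤ] [∀ n : ℤ, (CategoryTheory.shiftFunctor D n).Additive] [Pretriangulated D]
  [CategoryTheory.Linear k D] [HasFiniteBiproducts D]

set_option linter.unusedSectionVars false

section StatementEightAux

lemma isZero_shift_of_isZero {d : D} (h : IsZero d) (m : ℤ) : IsZero (d⟦m⟧) := by
  rw [IsZero.iff_id_eq_zero] at h ⊢
  rw [← (shiftFunctor D m).map_id, h, Functor.map_zero]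

lemma isZero_of_isZero_shift {d : D} {m : ℤ} (h : IsZero (d⟦m⟧)) : IsZero d := by
  rw [IsZero.iff_id_eq_zero] at h ⊢
  apply (shiftFunctor D m).map_injective
  rw [(shiftFunctor D m).map_id, Functor.map_zero]
  exact h

lemma hom_zero_of_iso {a b a' b' : D} (ea : a ≅ a') (eb : b ≅ b')
    (h : ∀ f : a' ⟶ b', f = 0) (f : a ⟶ b) : f = 0 := by
  have h2 := h (ea.inv ≫ f ≫ eb.hom)
  have h3 : f = ea.hom ≫ (ea.inv ≫ f ≫ eb.hom) ≫ eb.inv := by simp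
  rw [h3, h2, zero_comp, comp_zero]

lemma hom_zero_shift {a b : D} (m : ℤ) (h : ∀ g : a⟦m⟧ ⟶ b⟦m⟧, g = 0) (f : a ⟶ b) :
    f = 0 := by
  apply (shiftFunctor D m).map_injective
  rw [Functor.map_zero]
  exact h _

/-- `a⟦i⟧⟦j⟧ ≅ a` when `i + j = 0`. -/
noncomputable def shiftShiftCancel (a : D) (i j : ℤ) (h : i + j = 0) : a⟦i⟧⟦j⟧ ≅ a :=
  ((shiftFunctorAdd' D i j 0 h).app a).symm ≪≫ (shiftFunctorZero D ℤ).app a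

lemma hom_zero_unshift {a b : D} (m : ℤ) (h : ∀ f : a ⟶ b⟦m⟧, f = 0)
    (g : a⟦-m⟧ ⟶ b) : g = 0 :=
  hom_zero_shift m
    (fun g' => hom_zero_of_iso (shiftShiftCancel a (-m) m (by ring)) (Iso.refl _) h g') g

lemma hom_zero_reshift {a b : D} (m : ℤ) (h : ∀ g : a⟦-m⟧ ⟶ b, g = 0)
    (f : a ⟶ b⟦m⟧) : f = 0 :=
  hom_zero_shift (-m)
    (fun f' => hom_zero_of_iso (Iso.refl _) (shiftShiftCancel b m (-m) (by ring)) h f') f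

variable {n : ℕ}

lemma serre_hom_zero (HS : HereditarySetup k D n) {x y : D}
    (h : ∀ f : x ⟶ y, f = 0) (g : y ⟶ HS.serreF.obj x) : g = 0 := by
  refine (Module.forall_dual_apply_eq_zero_iff k g).mp ?_
  intro φ
  obtain ⟨f, hf, -⟩ := HS.serre_duality x y φ
  rw [← hf g, h f, zero_comp]
  exact map_zero _

lemma serre_hom_zero' (HS : HereditarySetup k D n) {x y : D}
    (h : ∀ g : y ⟶ HS.serreF.obj x, g = 0) (f : x ⟶ y) : f = 0 := by
  obtain ⟨f₀, -, huniq⟩ := HS.serre_duality x y 0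
  have h1 : f = f₀ := huniq f (fun g => by simp [h g])
  have h2 : (0 : x ⟶ y) = f₀ := huniq 0 (fun g => by simp [h g])
  rw [h1, ← h2]

lemma heart_mem_of_iso (HS : HereditarySetup k D n) {a b : D} (e : a ≅ b)
    (hb : b ∈ heart HS.X HS.Y) : a ∈ heart HS.X HS.Y :=
  ⟨mem_of_iso HS.tstr.retractX e hb.1,
   mem_of_iso HS.tstr.retractY ((shiftFunctor D (-1 : ℤ)).mapIso e) hb.2⟩

lemma shift_mem_X (HS : HereditarySetup k D n) {x : D} (hx : x ∈ HS.X) {s : ℤ}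
    (hs : 0 ≤ s) : x⟦s⟧ ∈ HS.X := by
  obtain ⟨m, rfl⟩ := Int.eq_ofNat_of_zero_le hs
  clear hs
  induction m with
  | zero => exact mem_of_iso HS.tstr.retractX ((shiftFunctorZero D ℤ).app x) hx
  | succ m ih =>
      have e : x⟦((m + 1 : ℕ) : ℤ)⟧ ≅ (x⟦((m : ℕ) : ℤ)⟧)⟦(1 : ℤ)⟧ :=
        (shiftFunctorAdd' D ((m : ℕ) : ℤ) 1 ((m + 1 : ℕ) : ℤ) (by push_cast; ring)).app x
      exact mem_of_iso HS.tstr.retractX e (HS.tstr.shiftX _ ih)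

lemma isZero_of_mem_X_Y (HS : HereditarySetup k D n) {c : D} (hX : c ∈ HS.X)
    (hY : c ∈ HS.Y) : IsZero c := by
  rw [IsZero.iff_id_eq_zero]
  exact HS.tstr.homZero c hX c hY (𝟙 c)

/-- `d` decomposes into shifted heart pieces `(h i)⟦s⟧ ∈ H` with `P s`. -/
def PiecesIn (HS : HereditarySetup k D n) (P : ℤ → Prop) (d : D) : Prop :=
  ∃ (m : ℕ) (h : Fin m → D),
    (∀ i, IsZero (h i) ∨ ∃ s : ℤ, P s ∧ (h i)⟦s⟧ ∈ heart HS.X HS.Y) ∧ Nonempty (d ≅ ⨁ h)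

lemma PiecesIn.mono {HS : HereditarySetup k D n} {P Q : ℤ → Prop} {d : D}
    (h : PiecesIn HS P d) (hPQ : ∀ s, P s → Q s) : PiecesIn HS Q d := by
  obtain ⟨m, f, hf, he⟩ := h
  exact ⟨m, f, fun i => (hf i).imp id (by rintro ⟨s, hs, hm⟩; exact ⟨s, hPQ s hs, hm⟩), he⟩

lemma PiecesIn.of_iso {HS : HereditarySetup k D n} {P : ℤ → Prop} {d d' : D}
    (e : d' ≅ d) (h : PiecesIn HS P d) : PiecesIn HS P d' := by
  obtain ⟨m, f, hf, ⟨ed⟩⟩ := h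
  exact ⟨m, f, hf, ⟨e ≪≫ ed⟩⟩

lemma hom_zero_heart (HS : HereditarySetup k D n) {a b : D} {s t : ℤ}
    (ha : a⟦s⟧ ∈ heart HS.X HS.Y) (hb : b⟦t⟧ ∈ heart HS.X HS.Y)
    (h0 : s - t ≠ 0) (h1 : s - t ≠ 1) (f : a ⟶ b) : f = 0 := by
  apply (shiftFunctor D s).map_injective
  rw [Functor.map_zero]
  have e : b⟦s⟧ ≅ (b⟦t⟧)⟦s - t⟧ := (shiftFunctorAdd' D t (s - t) s (by ring)).app b
  have hz := HS.hereditary _ ha _ hb (s - t) h0 h1 ((shiftFunctor D s).map f ≫ e.hom)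
  calc (shiftFunctor D s).map f = ((shiftFunctor D s).map f ≫ e.hom) ≫ e.inv := by simp
  _ = 0 := by rw [hz, zero_comp]

lemma hom_zero_pieces_to (HS : HereditarySetup k D n) {P : ℤ → Prop} {d : D}
    (hd : PiecesIn HS P d) {c : D} {s : ℤ} (hc : c⟦s⟧ ∈ heart HS.X HS.Y)
    (hyp : ∀ t, P t → t - s ≠ 0 ∧ t - s ≠ 1) (f : d ⟶ c) : f = 0 := by
  obtain ⟨m, h, hh, ⟨e⟩⟩ := hd
  have hz : e.inv ≫ f = 0 := by
    apply biproduct.hom_ext'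
    intro i
    rw [comp_zero]
    rcases hh i with h0 | ⟨t, hPt, hmem⟩
    · exact h0.eq_of_src _ _
    · exact hom_zero_heart HS hmem hc (hyp t hPt).1 (hyp t hPt).2 _
  calc f = e.hom ≫ (e.inv ≫ f) := by simp
  _ = 0 := by rw [hz, comp_zero]

lemma hom_zero_pieces (HS : HereditarySetup k D n) {P Q : ℤ → Prop} {d e : D}
    (hd : PiecesIn HS P d) (he : PiecesIn HS Q e)
    (hyp : ∀ s t, P s → Q t → s - t ≠ 0 ∧ s - t ≠ 1) (f : d ⟶ e) : f = 0 := by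
  obtain ⟨m, g, hg, ⟨ee⟩⟩ := he
  have hz : f ≫ ee.hom = 0 := by
    apply biproduct.hom_ext
    intro j
    rw [zero_comp, Category.assoc]
    rcases hg j with h0 | ⟨t, hQt, hmem⟩
    · exact h0.eq_of_tgt _ _
    · exact hom_zero_pieces_to HS hd hmem (fun s hs => hyp s t hs hQt) _
  calc f = (f ≫ ee.hom) ≫ ee.inv := by simp
  _ = 0 := by rw [hz, zero_comp]

lemma piecesIn_mk (HS : HereditarySetup k D n) (P : ℤ → Prop) (d : D)
    (hc : ∀ (c : D) (s : ℤ), c⟦s⟧ ∈ heart HS.X HS.Y → ∀ (ι : c ⟶ d) (π : d ⟶ c),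
      ι ≫ π = 𝟙 c → IsZero c ∨ P s) : PiecesIn HS P d := by
  obtain ⟨m, h, hs, ⟨e⟩⟩ := HS.splitting d
  refine ⟨m, h, fun i => ?_, ⟨e⟩⟩
  obtain ⟨s, hsi⟩ := hs i
  rcases hc (h i) s hsi (biproduct.ι h i ≫ e.inv) (e.hom ≫ biproduct.π h i) (by simp) with
    h0 | hP
  · exact Or.inl h0
  · exact Or.inr ⟨s, hP, hsi⟩

lemma piecesIn_Y (HS : HereditarySetup k D n) {y : D} (hy : y ∈ HS.Y) :
    PiecesIn HS (fun s => 1 ≤ s) y := by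
  apply piecesIn_mk
  intro c s hc ι π hιπ
  by_cases hs : 1 ≤ s
  · exact Or.inr hs
  · left
    push_neg at hs
    have hcX : c ∈ HS.X := by
      have e : c ≅ (c⟦s⟧)⟦-s⟧ :=
        ((shiftFunctorZero D ℤ).app c).symm ≪≫ (shiftFunctorAdd' D s (-s) 0 (by ring)).app c
      exact mem_of_iso HS.tstr.retractX e (shift_mem_X HS hc.1 (by omega))
    exact isZero_of_mem_X_Y HS hcX (HS.tstr.retractY ι π hιπ hy)

end StatementEightAux
section StatementEightAux2
variable {n : ℕ}

lemma piecesIn_fd (HS : HereditarySetup k D n) (w : ℕ) {d : D} (hd : d ∈ HS.fd w) :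
    PiecesIn HS (fun s => -(w : ℤ) ≤ s ∧ s ≤ 0) d := by
  obtain ⟨hdX, y, hy, ⟨ey⟩⟩ := hd
  apply piecesIn_mk
  intro c s hc ι π hιπ
  by_cases hs1 : s ≤ 0
  case neg =>
    left
    have hcX : c ∈ HS.X := HS.tstr.retractX ι π hιπ hdX
    have hY : c⟦s - 1⟧ ∈ HS.Y :=
      mem_of_iso HS.tstr.retractY ((shiftFunctorAdd' D s (-1) (s - 1) (by ring)).app c) hc.2
    have hX : c⟦s - 1⟧ ∈ HS.X := shift_mem_X HS hcX (by omega)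
    exact isZero_of_isZero_shift (isZero_of_mem_X_Y HS hX hY)
  case pos =>
    by_cases hs2 : -(w : ℤ) ≤ s
    · exact Or.inr ⟨hs2, hs1⟩
    · left
      push_neg at hs2
      have hcmem : (c⟦-(w : ℤ)⟧)⟦s + w⟧ ∈ heart HS.X HS.Y :=
        heart_mem_of_iso HS ((shiftFunctorAdd' D (-(w : ℤ)) (s + w) s (by ring)).app c).symm hc
      have hz1 : ∀ f : y ⟶ c⟦-(w : ℤ)⟧, f = 0 := fun f =>
        hom_zero_pieces_to HS (piecesIn_Y HS hy) hcmem (fun t ht => ⟨by omega, by omega⟩) f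
      have hz3 : ∀ f : c ⟶ (HS.serreF.obj y)⟦(w : ℤ)⟧, f = 0 :=
        hom_zero_reshift (w : ℤ) (serre_hom_zero HS hz1)
      have hι : ι = 0 := by
        have h4 := hz3 (ι ≫ ey.hom)
        calc ι = (ι ≫ ey.hom) ≫ ey.inv := by simp
        _ = 0 := by rw [h4, zero_comp]
      rw [IsZero.iff_id_eq_zero, ← hιπ, hι, zero_comp]

lemma piecesIn_serre (HS : HereditarySetup k D n) {P : ℤ → Prop} {x : D}
    (hx : PiecesIn HS P x) :
    PiecesIn HS (fun s => ∃ t, P t ∧ (s = t ∨ s = t - 1)) (HS.serreF.obj x) := by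
  apply piecesIn_mk
  intro c s hc ι π hιπ
  by_cases hP : ∃ t, P t ∧ (s = t ∨ s = t - 1)
  · exact Or.inr hP
  · left
    push_neg at hP
    have hz : ∀ f : x ⟶ c, f = 0 := fun f =>
      hom_zero_pieces_to HS hx hc (fun t ht => by
        obtain ⟨h1, h2⟩ := hP t ht
        exact ⟨by omega, by omega⟩) f
    have hι : ι = 0 := serre_hom_zero HS hz ι
    rw [IsZero.iff_id_eq_zero, ← hιπ, hι, zero_comp]

lemma piecesIn_shift (HS : HereditarySetup k D n) {P : ℤ → Prop} {x : D}
    (hx : PiecesIn HS P x) (m : ℤ) : PiecesIn HS (fun s => P (s + m)) (x⟦m⟧) := by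
  obtain ⟨mm, h, hh, ⟨e⟩⟩ := hx
  refine ⟨mm, fun i => (h i)⟦m⟧, fun i => ?_,
    ⟨(shiftFunctor D m).mapIso e ≪≫ Functor.mapBiproduct _ h⟩⟩
  rcases hh i with h0 | ⟨t, hPt, hmem⟩
  · exact Or.inl (isZero_shift_of_isZero h0 m)
  · refine Or.inr ⟨t - m, by show P (t - m + m); rw [show t - m + m = t from by ring]; exact hPt, ?_⟩
    exact heart_mem_of_iso HS ((shiftFunctorAdd' D m (t - m) t (by ring)).app (h i)).symm hmem

lemma piecesIn_F_iter (HS : HereditarySetup k D n) (w : ℕ) {z : D}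
    (hz : PiecesIn HS (fun s => s ≤ 0) z) (ℓ : ℕ) :
    PiecesIn HS (fun s => s ≤ 0) ((fun d => (HS.F w).obj d)^[ℓ] z) := by
  induction ℓ with
  | zero => exact hz
  | succ ℓ ih =>
      simp only [Function.iterate_succ_apply']
      exact (piecesIn_shift HS (piecesIn_serre HS ih) (w : ℤ)).mono
        (fun s hs => by obtain ⟨t, ht1, ht2⟩ := hs; omega)

lemma pow_iso_iter {w : ℕ} {HS : HereditarySetup k D n} (FP : FPowData HS w) (t : D)
    (ℓ : ℕ) : Nonempty ((FP.pow (ℓ : ℤ)).obj t ≅ (fun d => (HS.F w).obj d)^[ℓ] t) := by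
  induction ℓ with
  | zero =>
      rw [Nat.cast_zero]
      exact ⟨FP.pow_zero.app t⟩
  | succ ℓ ih =>
      obtain ⟨e⟩ := ih
      rw [Nat.cast_succ]
      simp only [Function.iterate_succ_apply']
      exact ⟨(FP.pow_succ (ℓ : ℤ)).app t ≪≫ (HS.F w).mapIso e⟩

lemma core_vanish {w : ℕ} {HS : HereditarySetup k D n} (FP : FPowData HS w)
    {S : Set D} (hSfd : S ⊆ HS.fd w) {s t : D} (hs : s ∈ S) (ht : t ∈ S)
    {m : ℤ} (hm : 1 ≤ m) (f : s ⟶ ((FP.pow m).obj t)⟦(1 : ℤ)⟧) : f = 0 := by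
  obtain ⟨ℓ, rfl⟩ : ∃ ℓ : ℕ, m = (ℓ : ℤ) + 1 := ⟨(m - 1).toNat, by omega⟩
  obtain ⟨e⟩ := pow_iso_iter FP t ℓ
  set v : D := (fun d => (HS.F w).obj d)^[ℓ] t with hv
  have E : ((FP.pow ((ℓ : ℤ) + 1)).obj t)⟦(1 : ℤ)⟧ ≅ (HS.serreF.obj v)⟦(w : ℤ) + 1⟧ :=
    (shiftFunctor D (1 : ℤ)).mapIso ((FP.pow_succ (ℓ : ℤ)).app t ≪≫ (HS.F w).mapIso e) ≪≫
      ((shiftFunctorAdd' D (w : ℤ) 1 ((w : ℤ) + 1) rfl).app (HS.serreF.obj v)).symm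
  have hvp : PiecesIn HS (fun u => u ≤ 0) v :=
    piecesIn_F_iter HS w ((piecesIn_fd HS w (hSfd ht)).mono (fun u hu => hu.2)) ℓ
  have hz : ∀ g : v ⟶ s⟦-((w : ℤ) + 1)⟧, g = 0 := fun g =>
    hom_zero_pieces HS hvp (piecesIn_shift HS (piecesIn_fd HS w (hSfd hs)) (-((w : ℤ) + 1)))
      (fun a b ha hb => ⟨by omega, by omega⟩) g
  have key : ∀ f' : s ⟶ (HS.serreF.obj v)⟦(w : ℤ) + 1⟧, f' = 0 :=
    hom_zero_reshift ((w : ℤ) + 1) (serre_hom_zero HS hz)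
  exact hom_zero_of_iso (Iso.refl s) E key f

lemma extClosure_subset_of_mem {S' A : Set D} (hSA : S' ⊆ A) (hA : IsExtClosed A) :
    extClosure S' ⊆ A := Set.sInter_subset_of_mem ⟨hSA, hA⟩

lemma isExtClosed_homZeroTo (z : D) : IsExtClosed {a : D | ∀ f : a ⟶ z, f = 0} := by
  refine ⟨fun x hx f => hx.eq_of_src f 0, ?_⟩
  rintro d ⟨u, v, fu, gv, hv, hu, hvm, hT⟩ f
  obtain ⟨g, hg⟩ := Triangle.yoneda_exact₂ _ hT f (hu _)
  rw [hg, show g = 0 from hvm g, comp_zero]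
  rfl

lemma isExtClosed_homZeroFrom (W : Set D) :
    IsExtClosed {c : D | ∀ a ∈ W, ∀ f : a ⟶ c⟦(1 : ℤ)⟧, f = 0} := by
  refine ⟨fun x hx a ha f => (isZero_shift_of_isZero hx 1).eq_of_tgt f 0, ?_⟩
  rintro c ⟨u, v, fu, gv, hv, hum, hvm, hT⟩ a ha f
  have huz : ∀ g : a⟦(-1 : ℤ)⟧ ⟶ u, g = 0 := hom_zero_unshift 1 (hum a ha)
  have hvz : ∀ g : a⟦(-1 : ℤ)⟧ ⟶ v, g = 0 := hom_zero_unshift 1 (hvm a ha)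
  have hcz : ∀ g : a⟦(-1 : ℤ)⟧ ⟶ c, g = 0 := by
    intro g
    obtain ⟨g', hg'⟩ := Triangle.coyoneda_exact₂ _ hT g (hvz _)
    rw [hg', show g' = 0 from huz g', zero_comp]
    rfl
  exact hom_zero_reshift 1 hcz f

lemma main_vanish {w : ℕ} {HS : HereditarySetup k D n} (FP : FPowData HS w)
    {S : Set D} (hSfd : S ⊆ HS.fd w) {m : ℤ} (hm : 1 ≤ m) :
    ∀ b ∈ extClosure (powImage FP.pow S m), ∀ a ∈ extClosure S,
      ∀ f : a ⟶ b⟦(1 : ℤ)⟧, f = 0 := by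
  have step1 : ∀ b ∈ powImage FP.pow S m, ∀ a ∈ extClosure S,
      ∀ f : a ⟶ b⟦(1 : ℤ)⟧, f = 0 := by
    rintro b ⟨t, ht, rfl⟩ a ha f
    have hsub : extClosure S ⊆ {a : D | ∀ f : a ⟶ ((FP.pow m).obj t)⟦(1 : ℤ)⟧, f = 0} :=
      extClosure_subset_of_mem (fun s hs f => core_vanish FP hSfd hs ht hm f)
        (isExtClosed_homZeroTo _)
    exact hsub ha f
  intro b hb
  have hsub : extClosure (powImage FP.pow S m) ⊆
      {c : D | ∀ a ∈ extClosure S, ∀ f : a ⟶ c⟦(1 : ℤ)⟧, f = 0} :=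
    extClosure_subset_of_mem step1 (isExtClosed_homZeroFrom _)
  exact hsub hb

end StatementEightAux2
/-- Corollary 4.3 of the paper. -/
theorem statement_8 {n : ℕ} (HS : HereditarySetup k D n) (w : ℕ) (hw : 1 ≤ w)
    (FP : FPowData HS w)
    (S : Set D) (hS : IsInfOrthogonal k S) (hSfd : S ⊆ HS.fd w)
    (m : ℤ) (hm : 1 ≤ m) :
    star (extClosure (powImage FP.pow S m)) (extClosure S) ⊆
      star (extClosure S) (extClosure (powImage FP.pow S m)) ∧
    ∀ d ∈ star (extClosure (powImage FP.pow S m)) (extClosure S),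
      ∃ a ∈ extClosure S, ∃ b ∈ extClosure (powImage FP.pow S m),
        Nonempty (d ≅ a ⊞ b) := by
  have split : ∀ d ∈ star (extClosure (powImage FP.pow S m)) (extClosure S),
      ∃ a ∈ extClosure S, ∃ b ∈ extClosure (powImage FP.pow S m), Nonempty (d ≅ a ⊞ b) := by
    rintro d ⟨a, b, f, g, h, ha, hb, hT⟩
    obtain rfl : h = 0 := main_vanish FP hSfd hm a ha b hb h
    obtain ⟨e, -, -⟩ := exists_iso_binaryBiproduct_of_distTriang _ hT rfl
    exact ⟨b, hb, a, ha, ⟨e ≪≫ biprod.braiding a b⟩⟩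
  refine ⟨?_, split⟩
  intro d hd
  obtain ⟨a, ha, b, hb, ⟨e⟩⟩ := split d hd
  refine ⟨a, b, biprod.inl ≫ e.inv, e.hom ≫ biprod.snd, 0, ha, hb, ?_⟩
  refine isomorphic_distinguished _ (binaryBiproductTriangle_distinguished a b) _ ?_
  exact Triangle.isoMk _ _ (Iso.refl a) e (Iso.refl b)
    (by exact (by simp : (biprod.inl ≫ e.inv) ≫ e.hom = 𝟙 a ≫ biprod.inl))
    (by exact (by simp : (e.hom ≫ biprod.snd) ≫ 𝟙 b = e.hom ≫ biprod.snd))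
    (by exact (by simp : (0 : b ⟶ a⟦(1 : ℤ)⟧) ≫ (shiftFunctor D (1 : ℤ)).map (𝟙 a) = 𝟙 b ≫ 0))

end Paper
end
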